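/- Fix ν ≥ 1, integers 2 ≤ i_1 < i_2 < … < i_ν ≤ k and l_1, …, l_ν ≥ 0 with i_λ + l_λ < i_{λ+1} for 1 ≤ λ ≤ ν−1 and i_ν + l_ν ≤ k. For each 1 ≤ λ ≤ ν and 0 ≤ j ≤ l_λ define φ̄^λ_j : (ℝ^{m+1})^{k+1} → ℝ by φ̄^λ_j(x) = ⟨x_{i_λ+j} − x_{i_λ+j−1}, x_{i_λ+j−1} − x_{i_λ−2}⟩ (so φ̄^λ_0 = A_{i_λ−1}). At every point q ∈ C^k(m) satisfying φ̄^λ_j(q) = 0 for all λ and j, the map (ℝ^{m+1})^{k+1} → ℝ^{k + ν + l_1 + ⋯ + l_ν} whose components are Ψ_0, …, Ψ_{k−1} together with all the φ̄^λ_j has surjective Fréchet derivative at q. (This expresses that the RVT class C_{R^{h_0} V T^{l_1} R^{h_1} ⋯ V T^{l_ν} R^{h_ν}} is an analytic submanifold of C^k(m) of codimension ν + l_1 + ⋯ + l_ν.) -/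

import Mathlib

noncomputable section

open scoped RealInnerProductSpace

open Fin.NatCast

namespace ArticulatedArm

/-- `ℝ^{m+1}` with the Euclidean structure. -/
abbrev Vec (m : ℕ) : Type := EuclideanSpace ℝ (Fin (m + 1))

/-- `(ℝ^{m+1})^{k+1}` with the Euclidean (product) structure. -/
abbrev Tup (m k : ℕ) : Type := PiLp 2 (fun _ : Fin (k + 1) => Vec m)

/-- The segment vector `x_{i+1} - x_i`. -/
def seg (m k : ℕ) (x : Tup m k) (i : ℕ) : Vec m :=
  x ((i + 1 : ℕ) : Fin (k + 1)) - x ((i : ℕ) : Fin (k + 1))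

/-- The configuration space `C^k(m)`. -/
def Conf (m k : ℕ) : Set (Tup m k) := {x | ∀ i, i < k → ‖seg m k x i‖ = 1}

/-- `A_{i,j}(x) = ⟨x_{i+1} - x_i, x_{j+1} - x_j⟩`. -/
def AA (m k : ℕ) (x : Tup m k) (i j : ℕ) : ℝ := ⟪seg m k x i, seg m k x j⟫

/-- `A_i(x) = A_{i,i-1}(x)`. -/
def Acoef (m k : ℕ) (x : Tup m k) (i : ℕ) : ℝ := AA m k x i (i - 1)

/-- `Z_i(x)`: the tuple whose `i`-th component is `x_{i+1} - x_i` and the others `0`. -/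
def Zt (m k : ℕ) (x : Tup m k) (i : ℕ) : Tup m k :=
  WithLp.toLp 2 (fun l => if (l : ℕ) = i then seg m k x i else 0)

/-- `N_i(x)`: the tuple with `i`-th component `-(x_{i+1} - x_i)`, `(i+1)`-th component
`x_{i+1} - x_i`, and the others `0`. -/
def Nt (m k : ℕ) (x : Tup m k) (i : ℕ) : Tup m k :=
  WithLp.toLp 2 (fun l => if (l : ℕ) = i then -(seg m k x i)
    else if (l : ℕ) = i + 1 then seg m k x i else 0)

/-- `Y_n(x) = Σ_{i=0}^{n-1} (Π_{j=i+1}^{n-1} A_j(x)) Z_i(x)`. -/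
def Yt (m k : ℕ) (x : Tup m k) (n : ℕ) : Tup m k :=
  ∑ i ∈ Finset.range n, (∏ j ∈ Finset.Ico (i + 1) n, Acoef m k x j) • Zt m k x i

/-- `Ψ_i(x) = ‖x_{i+1} - x_i‖² - 1`. -/
def Psi (m k : ℕ) (i : ℕ) (x : Tup m k) : ℝ := ‖seg m k x i‖ ^ 2 - 1

/-- `e_r^{(i)}`: the tuple whose `i`-th component is the `r`-th standard basis
vector of `ℝ^{m+1}` and whose other components are `0`. -/
def et (m k : ℕ) (i : ℕ) (r : Fin (m + 1)) : Tup m k :=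
  WithLp.toLp 2 (fun l => if (l : ℕ) = i then EuclideanSpace.single r (1 : ℝ) else 0)

/-! ### Auxiliary material for Statement 10 -/

/-- A linear map to `ι → ℝ` is surjective provided there is a "triangular" family of
vectors: `v i` has nonzero `i`-th output and kills all coordinates of strictly larger rank. -/
private lemma surj_of_triangular {E : Type*} [AddCommGroup E] [Module ℝ E]
    {ι : Type*} [Fintype ι] [DecidableEq ι] (L : E →ₗ[ℝ] ι → ℝ) (v : ι → E) (r : ι → ℕ)
    (hr : Function.Injective r)
    (hdiag : ∀ i, L (v i) i ≠ 0)
    (hoff : ∀ i j, r i < r j → L (v i) j = 0) :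
    Function.Surjective L := by
  have hdec : ∀ u : ι → ℝ, u = ∑ j, u j • (Pi.single j 1 : ι → ℝ) := by
    intro u; funext t
    simp [Pi.single_apply, Finset.sum_apply, mul_comm]
  have key : ∀ n (i : ι), r i < n → (Pi.single i 1 : ι → ℝ) ∈ LinearMap.range L := by
    intro n
    induction n with
    | zero => intro i hi; omega
    | succ n IH =>
      intro i hi
      set u := L (v i) with hu0
      have hu : u i • (Pi.single i 1 : ι → ℝ)
          + ∑ j ∈ Finset.univ.erase i, u j • (Pi.single j 1 : ι → ℝ) = u := by
        rw [Finset.add_sum_erase _ (fun j => u j • (Pi.single j 1 : ι → ℝ)) (Finset.mem_univ i)]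
        exact (hdec u).symm
      have hS : ∀ j ∈ Finset.univ.erase i, u j • (Pi.single j 1 : ι → ℝ) ∈ LinearMap.range L := by
        intro j hj
        rcases eq_or_ne (u j) 0 with h0 | h0
        · simp [h0]
        · have hji : j ≠ i := (Finset.mem_erase.1 hj).1
          have hle : ¬ r i < r j := fun h => h0 (hoff i j h)
          have hne : r j ≠ r i := fun h => hji (hr h)
          exact Submodule.smul_mem _ _ (IH j (by omega))
      have hmem : u i • (Pi.single i 1 : ι → ℝ) ∈ LinearMap.range L := by
        rw [eq_sub_of_add_eq hu]
        exact Submodule.sub_mem _ ⟨v i, rfl⟩ (Submodule.sum_mem _ hS)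
      have hsm := Submodule.smul_mem _ (u i)⁻¹ hmem
      rwa [smul_smul, inv_mul_cancel₀ (hdiag i), one_smul] at hsm
  intro f
  have hf : f ∈ LinearMap.range L := by
    rw [hdec f]
    exact Submodule.sum_mem _ fun j _ =>
      Submodule.smul_mem _ _ (key (r j + 1) j (Nat.lt_succ_self _))
  exact hf

/-- Derivative of `x ↦ ⟪L x, M x⟫` for continuous linear `L`, `M`. -/
private lemma hasFDerivAt_inner_clm {E F : Type*} [NormedAddCommGroup E] [NormedSpace ℝ E]
    [NormedAddCommGroup F] [InnerProductSpace ℝ F]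
    (L M : E →L[ℝ] F) (q : E) :
    HasFDerivAt (fun x => (⟪L x, M x⟫ : ℝ))
      ((innerSL ℝ (M q)).comp L + (innerSL ℝ (L q)).comp M) q := by
  have h := (L.hasFDerivAt (x := q)).inner ℝ (M.hasFDerivAt (x := q))
  refine h.congr_fderiv ?_
  ext v
  simp [real_inner_comm]
  ring

/-- Tail translation: the tuple equal to `w` in all positions `≥ p` and `0` before. -/
private def Tl (m k : ℕ) (p : ℕ) (w : Vec m) : Tup m k :=
  WithLp.toLp 2 (fun l => if p ≤ (l : ℕ) then w else 0)

/-- The continuous linear map `x ↦ x_a - x_b`. -/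
private def DdL (m k : ℕ) (a b : ℕ) : Tup m k →L[ℝ] Vec m :=
  PiLp.proj (𝕜 := ℝ) 2 (fun _ : Fin (k + 1) => Vec m) ((a : ℕ) : Fin (k + 1))
    - PiLp.proj (𝕜 := ℝ) 2 (fun _ : Fin (k + 1) => Vec m) ((b : ℕ) : Fin (k + 1))

private lemma DdL_apply (m k a b : ℕ) (x : Tup m k) :
    DdL m k a b x = x ((a : ℕ) : Fin (k + 1)) - x ((b : ℕ) : Fin (k + 1)) := rfl

/-- The derivative of `Ψ_i` at `q`. -/
private def DPsiD (m k : ℕ) (q : Tup m k) (i : ℕ) : Tup m k →L[ℝ] ℝ :=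
  (innerSL ℝ (DdL m k (i + 1) i q)).comp (DdL m k (i + 1) i)
    + (innerSL ℝ (DdL m k (i + 1) i q)).comp (DdL m k (i + 1) i)

/-- The derivative of `φ̄` (with parameters `I`, `J`) at `q`. -/
private def DphiD (m k : ℕ) (q : Tup m k) (I J : ℕ) : Tup m k →L[ℝ] ℝ :=
  (innerSL ℝ (DdL m k (I + J - 1) (I - 2) q)).comp (DdL m k (I + J) (I + J - 1))
    + (innerSL ℝ (DdL m k (I + J) (I + J - 1) q)).comp (DdL m k (I + J - 1) (I - 2))

private lemma DPsiD_apply (m k : ℕ) (q v : Tup m k) (i : ℕ) :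
    DPsiD m k q i v = ⟪seg m k q i, seg m k v i⟫ + ⟪seg m k q i, seg m k v i⟫ := rfl

private lemma DphiD_apply (m k : ℕ) (q v : Tup m k) (I J : ℕ) :
    DphiD m k q I J v
      = ⟪q ((I + J - 1 : ℕ) : Fin (k + 1)) - q ((I - 2 : ℕ) : Fin (k + 1)),
          v ((I + J : ℕ) : Fin (k + 1)) - v ((I + J - 1 : ℕ) : Fin (k + 1))⟫
        + ⟪q ((I + J : ℕ) : Fin (k + 1)) - q ((I + J - 1 : ℕ) : Fin (k + 1)),
            v ((I + J - 1 : ℕ) : Fin (k + 1)) - v ((I - 2 : ℕ) : Fin (k + 1))⟫ := rfl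

private lemma hasFDerivAt_Psi (m k : ℕ) (q : Tup m k) (i : ℕ) :
    HasFDerivAt (fun x => Psi m k i x) (DPsiD m k q i) q := by
  have h := (hasFDerivAt_inner_clm (DdL m k (i + 1) i) (DdL m k (i + 1) i) q).sub_const 1
  have he : (fun x => Psi m k i x)
      = fun x => (⟪DdL m k (i + 1) i x, DdL m k (i + 1) i x⟫ : ℝ) - 1 := by
    funext x
    show ‖seg m k x i‖ ^ 2 - 1 = (⟪seg m k x i, seg m k x i⟫ : ℝ) - 1
    rw [real_inner_self_eq_norm_sq]
  rw [he]
  exact h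

private lemma hasFDerivAt_phi (m k : ℕ) (q : Tup m k) (I J : ℕ) :
    HasFDerivAt (fun x : Tup m k =>
        (⟪x ((I + J : ℕ) : Fin (k + 1)) - x ((I + J - 1 : ℕ) : Fin (k + 1)),
          x ((I + J - 1 : ℕ) : Fin (k + 1)) - x ((I - 2 : ℕ) : Fin (k + 1))⟫ : ℝ))
      (DphiD m k q I J) q := by
  have h := hasFDerivAt_inner_clm (DdL m k (I + J) (I + J - 1)) (DdL m k (I + J - 1) (I - 2)) q
  have he : (fun x : Tup m k =>
        (⟪x ((I + J : ℕ) : Fin (k + 1)) - x ((I + J - 1 : ℕ) : Fin (k + 1)),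
          x ((I + J - 1 : ℕ) : Fin (k + 1)) - x ((I - 2 : ℕ) : Fin (k + 1))⟫ : ℝ))
      = fun x => (⟪DdL m k (I + J) (I + J - 1) x, DdL m k (I + J - 1) (I - 2) x⟫ : ℝ) := by
    funext x; rfl
  rw [he]
  exact h

/-- for indices `2 ≤ i_1 < … < i_ν ≤ k` and lengths `l_1,…,l_ν ≥ 0` with
`i_λ + l_λ < i_{λ+1}` and `i_ν + l_ν ≤ k`, and
`φ̄^λ_j(x) = ⟨x_{i_λ+j} - x_{i_λ+j-1}, x_{i_λ+j-1} - x_{i_λ-2}⟩`, at every `q ∈ C^k(m)`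
where all the `φ̄^λ_j` vanish, the map with components `Ψ_0,…,Ψ_{k-1}` together with all the
`φ̄^λ_j` has surjective Fréchet derivative at `q`. -/
theorem statement10 (m k ν : ℕ) (hm : 2 ≤ m) (hk : 2 ≤ k) (hν : 1 ≤ ν)
    (idx lnum : Fin ν → ℕ)
    (h2 : ∀ a : Fin ν, 2 ≤ idx a)
    (hmono : StrictMono idx)
    (hgap : ∀ a b : Fin ν, (b : ℕ) = (a : ℕ) + 1 → idx a + lnum a < idx b)
    (hlast : idx ⟨ν - 1, by omega⟩ + lnum ⟨ν - 1, by omega⟩ ≤ k) :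
    let phibar : ℕ → ℕ → Tup m k → ℝ := fun I J x =>
      ⟪x ((I + J : ℕ) : Fin (k + 1)) - x ((I + J - 1 : ℕ) : Fin (k + 1)),
        x ((I + J - 1 : ℕ) : Fin (k + 1)) - x ((I - 2 : ℕ) : Fin (k + 1))⟫
    ∀ q ∈ Conf m k, (∀ (a : Fin ν) (j : ℕ), j ≤ lnum a → phibar (idx a) j q = 0) →
      ∃ D : Tup m k →L[ℝ] ((Fin k → ℝ) × (((a : Fin ν) × Fin (lnum a + 1)) → ℝ)),
        HasFDerivAt (fun x : Tup m k =>
          ((fun i : Fin k => Psi m k (i : ℕ) x),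
           (fun p : (a : Fin ν) × Fin (lnum a + 1) => phibar (idx p.1) (p.2 : ℕ) x))) D q ∧
        Function.Surjective D := by
  intro phibar q hq hvan
  classical
  have qc : ∀ n1 n2 : ℕ, n1 = n2 →
      q ((n1 : ℕ) : Fin (k + 1)) = q ((n2 : ℕ) : Fin (k + 1)) := by
    intro n1 n2 h; subst h; rfl
  -- basic index facts
  have hchain : ∀ a b : Fin ν, a < b → idx a + lnum a < idx b := by
    intro a b hab
    have hb : (b : ℕ) < ν := b.isLt
    have hab' : (a : ℕ) < (b : ℕ) := hab
    have h1 : (a : ℕ) + 1 < ν := by omega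
    have hg := hgap a ⟨(a : ℕ) + 1, h1⟩ rfl
    rcases eq_or_lt_of_le (show (⟨(a : ℕ) + 1, h1⟩ : Fin ν) ≤ b by
      rw [Fin.le_def]; exact hab') with h | h
    · rw [h] at hg; exact hg
    · exact hg.trans (hmono h)
  have hbound : ∀ a : Fin ν, idx a + lnum a ≤ k := by
    intro a
    by_cases hb : (a : ℕ) = ν - 1
    · have ha : a = ⟨ν - 1, by omega⟩ := Fin.ext hb
      rw [ha]; exact hlast
    · have hab : a < (⟨ν - 1, by omega⟩ : Fin ν) := by
        rw [Fin.lt_def]; have := a.isLt; simp; omega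
      have h1 := hchain a _ hab
      have h3 : idx ⟨ν - 1, by omega⟩ ≤ k := le_trans (Nat.le_add_right _ _) hlast
      omega
  have hpinj : ∀ (a a' : Fin ν) (j j' : ℕ), j ≤ lnum a → j' ≤ lnum a' →
      idx a + j = idx a' + j' → a = a' ∧ j = j' := by
    intro a a' j j' hj hj' he
    rcases lt_trichotomy a a' with h | h | h
    · exact absurd he (by have := hchain a a' h; omega)
    · subst h; exact ⟨rfl, by omega⟩
    · exact absurd he (by have := hchain a' a h; omega)
  -- geometric facts at q
  have F1 : ∀ (a : Fin ν) (j : ℕ), j ≤ lnum a →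
      (⟪q ((idx a + j : ℕ) : Fin (k + 1)) - q ((idx a + j - 1 : ℕ) : Fin (k + 1)),
        q ((idx a + j - 1 : ℕ) : Fin (k + 1)) - q ((idx a - 2 : ℕ) : Fin (k + 1))⟫ : ℝ) = 0 :=
    fun a j hj => hvan a j hj
  have F2 : ∀ (a : Fin ν) (j : ℕ), j ≤ lnum a →
      (⟪q ((idx a + j - 1 : ℕ) : Fin (k + 1)) - q ((idx a - 2 : ℕ) : Fin (k + 1)),
        q ((idx a + j - 1 : ℕ) : Fin (k + 1)) - q ((idx a - 2 : ℕ) : Fin (k + 1))⟫ : ℝ)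
        = (j : ℝ) + 1 := by
    intro a j
    induction j with
    | zero =>
      intro hj
      have h2a := h2 a
      rw [qc (idx a + 0 - 1) ((idx a - 2) + 1) (by omega)]
      have hnrm : ‖seg m k q (idx a - 2)‖ = 1 := hq _ (by have := hbound a; omega)
      rw [show (q (((idx a - 2) + 1 : ℕ) : Fin (k + 1)) - q ((idx a - 2 : ℕ) : Fin (k + 1)))
        = seg m k q (idx a - 2) from rfl, real_inner_self_eq_norm_sq, hnrm]
      norm_num
    | succ n IH =>
      intro hj
      have h2a := h2 a
      have hb := hbound a
      have hn : n ≤ lnum a := by omega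
      have hcross := F1 a n hn
      rw [qc (idx a + (n + 1) - 1) (idx a + n) (by omega)]
      have hsplit : q ((idx a + n : ℕ) : Fin (k + 1)) - q ((idx a - 2 : ℕ) : Fin (k + 1))
          = (q ((idx a + n - 1 : ℕ) : Fin (k + 1)) - q ((idx a - 2 : ℕ) : Fin (k + 1)))
            + (q ((idx a + n : ℕ) : Fin (k + 1)) - q ((idx a + n - 1 : ℕ) : Fin (k + 1))) := by
        abel
      rw [hsplit, real_inner_add_add_self]
      have hs : (⟪q ((idx a + n : ℕ) : Fin (k + 1)) - q ((idx a + n - 1 : ℕ) : Fin (k + 1)),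
          q ((idx a + n : ℕ) : Fin (k + 1)) - q ((idx a + n - 1 : ℕ) : Fin (k + 1))⟫ : ℝ) = 1 := by
        rw [qc (idx a + n) ((idx a + n - 1) + 1) (by omega),
          show (q (((idx a + n - 1) + 1 : ℕ) : Fin (k + 1))
            - q ((idx a + n - 1 : ℕ) : Fin (k + 1))) = seg m k q (idx a + n - 1) from rfl,
          real_inner_self_eq_norm_sq, hq _ (by omega)]
        norm_num
      have hc : (⟪q ((idx a + n - 1 : ℕ) : Fin (k + 1)) - q ((idx a - 2 : ℕ) : Fin (k + 1)),
          q ((idx a + n : ℕ) : Fin (k + 1)) - q ((idx a + n - 1 : ℕ) : Fin (k + 1))⟫ : ℝ) = 0 := by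
        rw [real_inner_comm]; exact hcross
      rw [IH hn, hc, hs]
      push_cast
      ring
  -- evaluation of tail translations
  have hTl : ∀ (p n : ℕ) (w : Vec m), n ≤ k →
      Tl m k p w ((n : ℕ) : Fin (k + 1)) = if p ≤ n then w else 0 := by
    intro p n w hn
    simp only [Tl]
    rw [Fin.val_cast_of_lt (by omega : n < k + 1)]
  have hsegTl : ∀ (p : ℕ) (w : Vec m) (s : ℕ), s < k →
      seg m k (Tl m k p w) s = if p = s + 1 then w else 0 := by
    intro p w s hs
    rw [show seg m k (Tl m k p w) s
        = Tl m k p w ((s + 1 : ℕ) : Fin (k + 1)) - Tl m k p w ((s : ℕ) : Fin (k + 1)) from rfl,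
      hTl p (s + 1) w (by omega), hTl p s w (by omega)]
    by_cases h1 : p ≤ s
    · rw [if_pos (by omega), if_pos h1, if_neg (by omega)]; simp
    · by_cases hh2 : p = s + 1
      · rw [if_pos (by omega), if_neg h1, if_pos hh2]; simp
      · rw [if_neg (by omega), if_neg h1, if_neg hh2]; simp
  -- the derivative
  refine ⟨(ContinuousLinearMap.pi fun i : Fin k => DPsiD m k q (i : ℕ)).prod
    (ContinuousLinearMap.pi fun p : (a : Fin ν) × Fin (lnum a + 1) =>
      DphiD m k q (idx p.1) (p.2 : ℕ)), ?_, ?_⟩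
  · exact HasFDerivAt.prodMk (hasFDerivAt_pi.2 fun i => hasFDerivAt_Psi m k q (i : ℕ))
      (hasFDerivAt_pi.2 fun p => hasFDerivAt_phi m k q (idx p.1) (p.2 : ℕ))
  · -- surjectivity
    let LL : Tup m k →ₗ[ℝ] ((Fin k ⊕ ((a : Fin ν) × Fin (lnum a + 1))) → ℝ) :=
      { toFun := fun x => Sum.elim (fun i : Fin k => DPsiD m k q (i : ℕ) x)
          (fun p => DphiD m k q (idx p.1) (p.2 : ℕ) x)
        map_add' := by intro x y; funext t; cases t <;> simp
        map_smul' := by intro c x; funext t; cases t <;> simp }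
    have hsurj : Function.Surjective LL := by
      apply surj_of_triangular LL
        (Sum.elim (fun i : Fin k => Tl m k ((i : ℕ) + 1) (seg m k q (i : ℕ)))
          (fun p : (a : Fin ν) × Fin (lnum a + 1) => Tl m k (idx p.1 + (p.2 : ℕ))
            (q ((idx p.1 + (p.2 : ℕ) - 1 : ℕ) : Fin (k + 1))
              - q ((idx p.1 - 2 : ℕ) : Fin (k + 1)))))
        (Sum.elim (fun i : Fin k => k + 2 + (i : ℕ))
          (fun p => k + 2 - (idx p.1 + (p.2 : ℕ))))
      · -- injectivity of ranks
        intro x y hxy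
        match x, y with
        | Sum.inl i, Sum.inl s =>
          simp only [Sum.elim_inl] at hxy
          have : (i : ℕ) = (s : ℕ) := by omega
          exact congrArg Sum.inl (Fin.ext this)
        | Sum.inl i, Sum.inr p =>
          exfalso
          simp only [Sum.elim_inl, Sum.elim_inr] at hxy
          have := h2 p.1
          omega
        | Sum.inr p, Sum.inl i =>
          exfalso
          simp only [Sum.elim_inl, Sum.elim_inr] at hxy
          have := h2 p.1
          omega
        | Sum.inr ⟨a, j⟩, Sum.inr ⟨a', j'⟩ =>
          simp only [Sum.elim_inr] at hxy
          have hj : (j : ℕ) ≤ lnum a := Nat.lt_succ_iff.mp j.isLt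
          have hj' : (j' : ℕ) ≤ lnum a' := Nat.lt_succ_iff.mp j'.isLt
          have hba := hbound a
          have hba' := hbound a'
          have heq : idx a + (j : ℕ) = idx a' + (j' : ℕ) := by omega
          obtain ⟨rfl, hjj⟩ := hpinj a a' (j : ℕ) (j' : ℕ) hj hj' heq
          have : j = j' := Fin.ext hjj
          rw [this]
      · -- diagonal entries nonzero
        intro x
        match x with
        | Sum.inl i =>
          show DPsiD m k q (i : ℕ) (Tl m k ((i : ℕ) + 1) (seg m k q (i : ℕ))) ≠ 0
          rw [DPsiD_apply, hsegTl ((i : ℕ) + 1) (seg m k q (i : ℕ)) (i : ℕ) i.isLt,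
            if_pos rfl, real_inner_self_eq_norm_sq, hq _ i.isLt]
          norm_num
        | Sum.inr ⟨a, j⟩ =>
          show DphiD m k q (idx a) (j : ℕ)
            (Tl m k (idx a + (j : ℕ)) (q ((idx a + (j : ℕ) - 1 : ℕ) : Fin (k + 1))
              - q ((idx a - 2 : ℕ) : Fin (k + 1)))) ≠ 0
          have hj : (j : ℕ) ≤ lnum a := Nat.lt_succ_iff.mp j.isLt
          have h2a := h2 a
          have hba := hbound a
          rw [DphiD_apply,
            hTl (idx a + (j : ℕ)) (idx a + (j : ℕ)) _ (by omega),
            hTl (idx a + (j : ℕ)) (idx a + (j : ℕ) - 1) _ (by omega),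
            hTl (idx a + (j : ℕ)) (idx a - 2) _ (by omega),
            if_pos (le_refl (idx a + (j : ℕ))), if_neg (by omega), if_neg (by omega)]
          simp only [sub_zero, inner_zero_right, add_zero]
          rw [F2 a (j : ℕ) hj]
          positivity
      · -- triangularity
        intro x y hxy
        match x, y with
        | Sum.inl i, Sum.inl s =>
          simp only [Sum.elim_inl] at hxy
          show DPsiD m k q (s : ℕ) (Tl m k ((i : ℕ) + 1) (seg m k q (i : ℕ))) = 0
          rw [DPsiD_apply, hsegTl ((i : ℕ) + 1) (seg m k q (i : ℕ)) (s : ℕ) s.isLt,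
            if_neg (by omega), inner_zero_right]
          ring
        | Sum.inl i, Sum.inr p =>
          exfalso
          simp only [Sum.elim_inl, Sum.elim_inr] at hxy
          have := h2 p.1
          omega
        | Sum.inr ⟨a, j⟩, Sum.inl s =>
          -- the φ̄ columns kill all Ψ rows
          show DPsiD m k q (s : ℕ)
            (Tl m k (idx a + (j : ℕ)) (q ((idx a + (j : ℕ) - 1 : ℕ) : Fin (k + 1))
              - q ((idx a - 2 : ℕ) : Fin (k + 1)))) = 0
          have hj : (j : ℕ) ≤ lnum a := Nat.lt_succ_iff.mp j.isLt
          have h2a := h2 a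
          rw [DPsiD_apply, hsegTl (idx a + (j : ℕ)) _ (s : ℕ) s.isLt]
          by_cases hcase : idx a + (j : ℕ) = (s : ℕ) + 1
          · rw [if_pos hcase]
            rw [show seg m k q (s : ℕ)
              = q (((s : ℕ) + 1 : ℕ) : Fin (k + 1)) - q (((s : ℕ) : ℕ) : Fin (k + 1)) from rfl,
              qc ((s : ℕ) + 1) (idx a + (j : ℕ)) hcase.symm,
              qc (s : ℕ) (idx a + (j : ℕ) - 1) (by omega), F1 a (j : ℕ) hj]
            ring
          · rw [if_neg hcase, inner_zero_right]; ring
        | Sum.inr ⟨a, j⟩, Sum.inr ⟨a', j'⟩ =>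
          simp only [Sum.elim_inr] at hxy
          show DphiD m k q (idx a') (j' : ℕ)
            (Tl m k (idx a + (j : ℕ)) (q ((idx a + (j : ℕ) - 1 : ℕ) : Fin (k + 1))
              - q ((idx a - 2 : ℕ) : Fin (k + 1)))) = 0
          have hj : (j : ℕ) ≤ lnum a := Nat.lt_succ_iff.mp j.isLt
          have hj' : (j' : ℕ) ≤ lnum a' := Nat.lt_succ_iff.mp j'.isLt
          have h2a := h2 a
          have h2a' := h2 a'
          have hba := hbound a
          have hba' := hbound a'
          have hlt : idx a' + (j' : ℕ) < idx a + (j : ℕ) := by omega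
          rw [DphiD_apply,
            hTl (idx a + (j : ℕ)) (idx a' + (j' : ℕ)) _ (by omega),
            hTl (idx a + (j : ℕ)) (idx a' + (j' : ℕ) - 1) _ (by omega),
            hTl (idx a + (j : ℕ)) (idx a' - 2) _ (by omega),
            if_neg (by omega), if_neg (by omega), if_neg (by omega)]
          simp
    intro y
    obtain ⟨x, hx⟩ := hsurj (Sum.elim y.1 y.2)
    refine ⟨x, ?_⟩
    refine Prod.ext ?_ ?_
    · funext i
      exact congrFun hx (Sum.inl i)
    · funext p
      exact congrFun hx (Sum.inr p)

end ArticulatedArm
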